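/- arXiv:2306.03209 — 2 statements merged into one kernel-verified Lean document; each statement's English description precedes it below -/
import Mathlib

section
/- Let β > 0, B > 0, k ≥ 1, T ≥ 1, and dt, τ > 0. There exists a constant C > 0, depending only on β, B, k, T and dt/τ, such that for all x ∈ ℝ^d with ‖x‖ ≤ B and all prototype tuples R = (ρ_1, …, ρ_k), R′ = (ρ′_1, …, ρ′_k) with all ‖ρ_μ‖, ‖ρ′_μ‖ ≤ B, the T-step attractor iterates x_R^T and x_{R′}^T — defined by x^0 = x and x^{t+1} = x^t + (dt/τ)·Σ_{μ=1}^k (ρ_μ − x^t)·σ_μ(x^t; R) with σ_μ(v; R) = exp(−β‖ρ_μ − v‖²)/Σ_{ν=1}^k exp(−β‖ρ_ν − v‖²), and analogously for R′ — satisfy ‖x_R^T − x_{R′}^T‖ ≤ C·Σ_{μ=1}^k ‖ρ_μ − ρ′_μ‖. -/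
open scoped BigOperators

noncomputable def amIter {d k : ℕ} (β r : ℝ) (ρ : Fin k → EuclideanSpace ℝ (Fin d))
    (x : EuclideanSpace ℝ (Fin d)) : ℕ → EuclideanSpace ℝ (Fin d)
  | 0 => x
  | t + 1 =>
      amIter β r ρ x t +
        r • ∑ μ, (Real.exp (-β * ‖ρ μ - amIter β r ρ x t‖ ^ 2) /
            ∑ ν, Real.exp (-β * ‖ρ ν - amIter β r ρ x t‖ ^ 2)) • (ρ μ - amIter β r ρ x t)

lemma exp_lip {u v : ℝ} (hu : u ≤ 0) (hv : v ≤ 0) :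
    |Real.exp u - Real.exp v| ≤ |u - v| := by
  wlog h : v ≤ u generalizing u v
  · rw [abs_sub_comm, abs_sub_comm u v]; exact this hv hu (le_of_not_ge h)
  rw [abs_of_nonneg (sub_nonneg.2 (Real.exp_le_exp.2 h)), abs_of_nonneg (sub_nonneg.2 h)]
  have h1 := Real.add_one_le_exp (v - u)
  have h2 : Real.exp v = Real.exp u * Real.exp (v - u) := by
    rw [← Real.exp_add]; ring_nf
  have h3 : Real.exp u ≤ 1 := Real.exp_le_one_iff.2 hu
  nlinarith [Real.exp_pos u]

lemma normsq_diff {d : ℕ} (a b : EuclideanSpace ℝ (Fin d)) :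
    |‖a‖^2 - ‖b‖^2| ≤ ‖a - b‖ * (‖a‖ + ‖b‖) := by
  have h1 : |‖a‖ - ‖b‖| ≤ ‖a - b‖ := abs_norm_sub_norm_le a b
  have h2 : ‖a‖^2 - ‖b‖^2 = (‖a‖ - ‖b‖) * (‖a‖ + ‖b‖) := by ring
  rw [h2, abs_mul, abs_of_nonneg (by positivity : (0:ℝ) ≤ ‖a‖ + ‖b‖)]
  exact mul_le_mul_of_nonneg_right h1 (by positivity)

lemma sum_exp_pos {d k : ℕ} (hk : 1 ≤ k) (β : ℝ) (ρ : Fin k → EuclideanSpace ℝ (Fin d))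
    (v : EuclideanSpace ℝ (Fin d)) :
    (0:ℝ) < ∑ ν, Real.exp (-β * ‖ρ ν - v‖ ^ 2) :=
  Finset.sum_pos (fun _ _ => Real.exp_pos _) ⟨⟨0, hk⟩, Finset.mem_univ _⟩

lemma amIter_norm_le {d k : ℕ} (β r B : ℝ) (hr : 0 < r) (hB : 0 ≤ B) (hk : 1 ≤ k)
    (ρ : Fin k → EuclideanSpace ℝ (Fin d)) (x : EuclideanSpace ℝ (Fin d))
    (hx : ‖x‖ ≤ B) (hρ : ∀ μ, ‖ρ μ‖ ≤ B) :
    ∀ t, ‖amIter β r ρ x t‖ ≤ (1 + 2*r)^t * B := by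
  intro t
  induction t with
  | zero => simpa [amIter] using hx
  | succ t ih =>
    set y := amIter β r ρ x t with hy
    set S := ∑ ν, Real.exp (-β * ‖ρ ν - y‖ ^ 2) with hSdef
    have hS : (0:ℝ) < S := sum_exp_pos hk β ρ y
    have hσsum : ∑ μ, Real.exp (-β * ‖ρ μ - y‖ ^ 2) / S = 1 := by
      rw [← Finset.sum_div]; exact div_self hS.ne'
    have hbd : ‖∑ μ, (Real.exp (-β * ‖ρ μ - y‖ ^ 2) / S) • (ρ μ - y)‖ ≤ B + ‖y‖ := by
      calc ‖∑ μ, (Real.exp (-β * ‖ρ μ - y‖ ^ 2) / S) • (ρ μ - y)‖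
          ≤ ∑ μ, ‖(Real.exp (-β * ‖ρ μ - y‖ ^ 2) / S) • (ρ μ - y)‖ := norm_sum_le _ _
        _ ≤ ∑ μ, (Real.exp (-β * ‖ρ μ - y‖ ^ 2) / S) * (B + ‖y‖) := by
            apply Finset.sum_le_sum
            intro μ _
            rw [norm_smul, Real.norm_eq_abs,
              abs_of_nonneg (div_nonneg (Real.exp_pos _).le hS.le)]
            apply mul_le_mul_of_nonneg_left _ (div_nonneg (Real.exp_pos _).le hS.le)
            calc ‖ρ μ - y‖ ≤ ‖ρ μ‖ + ‖y‖ := norm_sub_le _ _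
              _ ≤ B + ‖y‖ := by linarith [hρ μ]
        _ = B + ‖y‖ := by rw [← Finset.sum_mul, hσsum, one_mul]
    have hstep : ‖amIter β r ρ x (t+1)‖ ≤ ‖y‖ + r * (B + ‖y‖) := by
      calc ‖y + r • ∑ μ, (Real.exp (-β * ‖ρ μ - y‖ ^ 2) / S) • (ρ μ - y)‖
          ≤ ‖y‖ + ‖r • ∑ μ, (Real.exp (-β * ‖ρ μ - y‖ ^ 2) / S) • (ρ μ - y)‖ := norm_add_le _ _
        _ ≤ ‖y‖ + r * (B + ‖y‖) := by
            rw [norm_smul, Real.norm_eq_abs, abs_of_pos hr]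
            exact add_le_add le_rfl (mul_le_mul_of_nonneg_left hbd hr.le)
    have hpow : (1:ℝ) ≤ (1 + 2*r)^t := one_le_pow₀ (by linarith)
    calc ‖amIter β r ρ x (t+1)‖ ≤ ‖y‖ + r * (B + ‖y‖) := hstep
      _ ≤ (1 + 2*r)^(t+1) * B := by
          rw [pow_succ]
          nlinarith [mul_le_mul_of_nonneg_left ih hr.le, mul_le_mul_of_nonneg_right hpow hB]

lemma div_sub_div_abs_le (E E' S S' s bE bS : ℝ) (hS : 0 < S) (hS' : 0 < S')
    (hs : 0 < s) (hSlb : s ≤ S) (hE'0 : 0 ≤ E') (hE'ub : E' ≤ S')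
    (hE : |E - E'| ≤ bE) (hSd : |S - S'| ≤ bS) :
    |E/S - E'/S'| ≤ bE/s + bS/s := by
  have hid : E/S - E'/S' = (E - E')/S + (E'/S') * ((S' - S)/S) := by
    field_simp
    ring
  have h1 : |(E - E')/S| ≤ bE/s := by
    rw [abs_div, abs_of_pos hS]
    exact div_le_div₀ ((abs_nonneg _).trans hE) hE hs hSlb
  have h2 : |(E'/S') * ((S' - S)/S)| ≤ bS/s := by
    rw [abs_mul]
    have ha : |E'/S'| ≤ 1 := by
      rw [abs_of_nonneg (div_nonneg hE'0 hS'.le)]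
      exact div_le_one_of_le₀ hE'ub hS'.le
    have hb : |(S' - S)/S| ≤ bS/s := by
      rw [abs_div, abs_of_pos hS, abs_sub_comm]
      exact div_le_div₀ ((abs_nonneg _).trans hSd) hSd hs hSlb
    calc |E'/S'| * |(S' - S)/S| ≤ 1 * (bS/s) := mul_le_mul ha hb (abs_nonneg _) zero_le_one
      _ = bS/s := one_mul _
  calc |E/S - E'/S'| ≤ |(E - E')/S| + |(E'/S') * ((S' - S)/S)| := by
        rw [hid]; exact abs_add_le _ _
    _ ≤ bE/s + bS/s := add_le_add h1 h2

set_option maxHeartbeats 1000000 in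
/-- For `β, B > 0`, `k, T ≥ 1` and step ratio `r = dt/τ > 0`, there is a constant
`C > 0`, depending only on `β`, `B`, `k`, `T` and `r`, such that the `T`-step AM iterates
satisfy `‖x_R^T - x_{R'}^T‖ ≤ C ∑_μ ‖ρ_μ - ρ'_μ‖` for all `x` and prototype tuples
`R, R'` in the ball of radius `B`. -/
theorem stmt_13 (β B r : ℝ) (k T : ℕ) (hβ : 0 < β) (hB : 0 < B) (hk : 1 ≤ k)
    (hT : 1 ≤ T) (hr : 0 < r) :
    ∃ C : ℝ, 0 < C ∧ ∀ (d : ℕ) (x : EuclideanSpace ℝ (Fin d))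
      (ρ ρ' : Fin k → EuclideanSpace ℝ (Fin d)),
      ‖x‖ ≤ B → (∀ μ, ‖ρ μ‖ ≤ B) → (∀ μ, ‖ρ' μ‖ ≤ B) →
      ‖amIter β r ρ x T - amIter β r ρ' x T‖ ≤ C * ∑ μ, ‖ρ μ - ρ' μ‖ := by
  have hk' : (1:ℝ) ≤ (k:ℝ) := by exact_mod_cast hk
  set M := (1 + 2*r)^T * B with hMdef
  have hM : 0 < M := by positivity
  set s := Real.exp (-β*(B+M)^2) with hsdef
  have hs : 0 < s := Real.exp_pos _
  set L₁ := 2*β*(B+M) with hL1def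
  have hL₁ : 0 < L₁ := by positivity
  set L₂ := 2*(k:ℝ)*L₁/s with hL2def
  have hL₂ : 0 < L₂ := by positivity
  set D := r*((B+M)*L₂ + 1) with hDdef
  have hD : 0 < D := by positivity
  set A := 1 + (k:ℝ)*D with hAdef
  have hA : 1 ≤ A := by nlinarith
  set K := A + D with hKdef
  have hK : 1 ≤ K := by linarith
  clear_value M s L₁ L₂ D A K
  refine ⟨K^T, pow_pos (by linarith) T, ?_⟩
  intro d x ρ ρ' hx hρ hρ'
  set Δ := ∑ μ, ‖ρ μ - ρ' μ‖ with hΔdef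
  have hΔ : 0 ≤ Δ := Finset.sum_nonneg fun μ _ => norm_nonneg _
  have hδΔ : ∀ μ, ‖ρ μ - ρ' μ‖ ≤ Δ := by
    intro μ
    exact Finset.single_le_sum (fun ν _ => norm_nonneg (ρ ν - ρ' ν)) (Finset.mem_univ μ)
  have key : ∀ t, t ≤ T → ‖amIter β r ρ x t - amIter β r ρ' x t‖ ≤ K^t * Δ := by
    intro t
    induction t with
    | zero => intro _; simpa [amIter] using hΔ
    | succ t ih =>
      intro htT
      have htT' : t ≤ T := Nat.le_of_succ_le htT
      have ihb := ih htT'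
      set y := amIter β r ρ x t with hydef
      set y' := amIter β r ρ' x t with hy'def
      set δx := ‖y - y'‖ with hδxdef
      have hδx0 : 0 ≤ δx := norm_nonneg _
      -- iterate norm bounds
      have hy : ‖y‖ ≤ M := by
        rw [hydef]
        calc ‖amIter β r ρ x t‖ ≤ (1 + 2*r)^t * B := amIter_norm_le β r B hr hB.le hk ρ x hx hρ t
          _ ≤ M := by
            rw [hMdef]
            exact mul_le_mul_of_nonneg_right
              (pow_le_pow_right₀ (by linarith) htT') hB.le
      have hy' : ‖y'‖ ≤ M := by
        rw [hy'def]
        calc ‖amIter β r ρ' x t‖ ≤ (1 + 2*r)^t * B := amIter_norm_le β r B hr hB.le hk ρ' x hx hρ' t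
          _ ≤ M := by
            rw [hMdef]
            exact mul_le_mul_of_nonneg_right
              (pow_le_pow_right₀ (by linarith) htT') hB.le
      set E : Fin k → ℝ := fun μ => Real.exp (-β * ‖ρ μ - y‖ ^ 2) with hEdef
      set E' : Fin k → ℝ := fun μ => Real.exp (-β * ‖ρ' μ - y'‖ ^ 2) with hE'def
      set S := ∑ ν, E ν with hSdef
      set S' := ∑ ν, E' ν with hS'def
      clear_value y y' δx E E' S S'
      have hEpos : ∀ ν, 0 < E ν := by intro ν; rw [hEdef]; exact Real.exp_pos _
      have hE'pos : ∀ ν, 0 < E' ν := by intro ν; rw [hE'def]; exact Real.exp_pos _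
      have hS : (0:ℝ) < S := by
        rw [hSdef]; exact Finset.sum_pos (fun ν _ => hEpos ν) ⟨⟨0, hk⟩, Finset.mem_univ _⟩
      have hS' : (0:ℝ) < S' := by
        rw [hS'def]; exact Finset.sum_pos (fun ν _ => hE'pos ν) ⟨⟨0, hk⟩, Finset.mem_univ _⟩
      -- distance bounds
      have hnorm1 : ∀ μ, ‖ρ μ - y‖ ≤ B + M := fun μ => by
        calc ‖ρ μ - y‖ ≤ ‖ρ μ‖ + ‖y‖ := norm_sub_le _ _
          _ ≤ B + M := add_le_add (hρ μ) hy
      have hnorm2 : ∀ μ, ‖ρ' μ - y'‖ ≤ B + M := fun μ => by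
        calc ‖ρ' μ - y'‖ ≤ ‖ρ' μ‖ + ‖y'‖ := norm_sub_le _ _
          _ ≤ B + M := add_le_add (hρ' μ) hy'
      have hE'ub : ∀ μ, E' μ ≤ S' := by
        intro μ
        rw [hS'def]
        exact Finset.single_le_sum (fun ν _ => (hE'pos ν).le) (Finset.mem_univ μ)
      have hSlb : s ≤ S := by
        have h0 : s ≤ E ⟨0, hk⟩ := by
          simp only [hEdef, hsdef]
          apply Real.exp_le_exp.2
          have h1 := hnorm1 ⟨0, hk⟩
          have h2 : ‖ρ ⟨0,hk⟩ - y‖^2 ≤ (B+M)^2 := by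
            nlinarith [norm_nonneg (ρ ⟨0,hk⟩ - y)]
          nlinarith [mul_le_mul_of_nonneg_left h2 hβ.le]
        rw [hSdef]
        exact h0.trans (Finset.single_le_sum (fun ν _ => (hEpos ν).le) (Finset.mem_univ _))
      -- pointwise exp difference
      have hediff : ∀ μ, |E μ - E' μ| ≤ L₁ * (‖ρ μ - ρ' μ‖ + δx) := by
        intro μ
        have hab : ρ μ - y - (ρ' μ - y') = (ρ μ - ρ' μ) - (y - y') := by abel
        have h1 : ‖ρ μ - y - (ρ' μ - y')‖ ≤ ‖ρ μ - ρ' μ‖ + δx := by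
          rw [hab, hδxdef]; exact norm_sub_le _ _
        simp only [hEdef, hE'def]
        calc |Real.exp (-β * ‖ρ μ - y‖ ^ 2) - Real.exp (-β * ‖ρ' μ - y'‖ ^ 2)|
            ≤ |(-β * ‖ρ μ - y‖ ^ 2) - (-β * ‖ρ' μ - y'‖ ^ 2)| := by
              apply exp_lip
              · nlinarith [sq_nonneg (‖ρ μ - y‖)]
              · nlinarith [sq_nonneg (‖ρ' μ - y'‖)]
          _ = β * |‖ρ μ - y‖ ^ 2 - ‖ρ' μ - y'‖ ^ 2| := by
              rw [show (-β * ‖ρ μ - y‖ ^ 2) - (-β * ‖ρ' μ - y'‖ ^ 2)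
                  = -(β * (‖ρ μ - y‖ ^ 2 - ‖ρ' μ - y'‖ ^ 2)) by ring,
                abs_neg, abs_mul, abs_of_pos hβ]
          _ ≤ β * (‖ρ μ - y - (ρ' μ - y')‖ * (‖ρ μ - y‖ + ‖ρ' μ - y'‖)) :=
              mul_le_mul_of_nonneg_left (normsq_diff _ _) hβ.le
          _ ≤ L₁ * (‖ρ μ - ρ' μ‖ + δx) := by
              rw [hL1def]
              have h2 : ‖ρ μ - y - (ρ' μ - y')‖ * (‖ρ μ - y‖ + ‖ρ' μ - y'‖)
                  ≤ (‖ρ μ - ρ' μ‖ + δx) * (2*(B+M)) := by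
                apply mul_le_mul h1 (by linarith [hnorm1 μ, hnorm2 μ]) _ _
                · exact add_nonneg (norm_nonneg _) (norm_nonneg _)
                · exact add_nonneg (norm_nonneg _) hδx0
              nlinarith [mul_le_mul_of_nonneg_left h2 hβ.le]
      -- sum difference
      have hSdiff : |S - S'| ≤ L₁ * (Δ + k * δx) := by
        calc |S - S'| = |∑ μ, (E μ - E' μ)| := by rw [hSdef, hS'def, Finset.sum_sub_distrib]
          _ ≤ ∑ μ, |E μ - E' μ| := Finset.abs_sum_le_sum_abs _ _
          _ ≤ ∑ μ, L₁ * (‖ρ μ - ρ' μ‖ + δx) := Finset.sum_le_sum fun μ _ => hediff μ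
          _ = L₁ * (Δ + k * δx) := by
              rw [← Finset.mul_sum, Finset.sum_add_distrib, Finset.sum_const,
                Finset.card_univ, Fintype.card_fin, nsmul_eq_mul, hΔdef]
      have hεbound : ∀ μ, L₁ * (‖ρ μ - ρ' μ‖ + δx) ≤ L₁ * (Δ + k * δx) := by
        intro μ
        apply mul_le_mul_of_nonneg_left _ hL₁.le
        have : δx ≤ (k:ℝ) * δx := le_mul_of_one_le_left hδx0 hk'
        linarith [hδΔ μ]
      -- softmax difference
      have hΔk : 0 ≤ Δ + (k:ℝ) * δx :=
        add_nonneg hΔ (mul_nonneg (Nat.cast_nonneg k) hδx0)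
      have hσdiff : ∀ μ, |E μ / S - E' μ / S'| ≤ (2*L₁/s) * (Δ + k * δx) := by
        intro μ
        have h := div_sub_div_abs_le (E μ) (E' μ) S S' s (L₁ * (Δ + (k:ℝ) * δx))
          (L₁ * (Δ + (k:ℝ) * δx)) hS hS' hs hSlb (hE'pos μ).le (hE'ub μ)
          ((hediff μ).trans (hεbound μ)) hSdiff
        calc |E μ / S - E' μ / S'|
            ≤ L₁ * (Δ + (k:ℝ) * δx)/s + L₁ * (Δ + (k:ℝ) * δx)/s := h
          _ = (2*L₁/s) * (Δ + (k:ℝ) * δx) := by ring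
      -- the vector sum difference
      have hsum : ‖(∑ μ, (E μ / S) • (ρ μ - y)) - ∑ μ, (E' μ / S') • (ρ' μ - y')‖
          ≤ ((B+M)*L₂ + 1) * (Δ + k * δx) := by
        rw [← Finset.sum_sub_distrib]
        calc ‖∑ μ, ((E μ / S) • (ρ μ - y) - (E' μ / S') • (ρ' μ - y'))‖
            ≤ ∑ μ, ‖(E μ / S) • (ρ μ - y) - (E' μ / S') • (ρ' μ - y')‖ := norm_sum_le _ _
          _ ≤ ∑ μ, ((2*L₁/s) * (Δ + k * δx) * (B+M) + (‖ρ μ - ρ' μ‖ + δx)) := by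
              apply Finset.sum_le_sum
              intro μ _
              have hterm : (E μ / S) • (ρ μ - y) - (E' μ / S') • (ρ' μ - y')
                  = (E μ / S - E' μ / S') • (ρ μ - y) + (E' μ / S') • ((ρ μ - y) - (ρ' μ - y')) := by
                module
              rw [hterm]
              have hσ'le1 : E' μ / S' ≤ 1 := div_le_one_of_le₀ (hE'ub μ) hS'.le
              have hσ'0 : 0 ≤ E' μ / S' := div_nonneg (hE'pos μ).le hS'.le
              have hab : ρ μ - y - (ρ' μ - y') = (ρ μ - ρ' μ) - (y - y') := by abel
              calc ‖(E μ / S - E' μ / S') • (ρ μ - y) + (E' μ / S') • ((ρ μ - y) - (ρ' μ - y'))‖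
                  ≤ ‖(E μ / S - E' μ / S') • (ρ μ - y)‖ + ‖(E' μ / S') • ((ρ μ - y) - (ρ' μ - y'))‖ :=
                    norm_add_le _ _
                _ ≤ |E μ / S - E' μ / S'| * ‖ρ μ - y‖ + (E' μ / S') * ‖(ρ μ - y) - (ρ' μ - y')‖ := by
                    rw [norm_smul, norm_smul, Real.norm_eq_abs, Real.norm_eq_abs,
                      abs_of_nonneg hσ'0]
                _ ≤ (2*L₁/s) * (Δ + k * δx) * (B+M) + 1 * (‖ρ μ - ρ' μ‖ + δx) := by
                    apply add_le_add
                    · exact mul_le_mul (hσdiff μ) (hnorm1 μ) (norm_nonneg _)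
                        (mul_nonneg (div_nonneg (by linarith) hs.le) hΔk)
                    · apply mul_le_mul hσ'le1 _ (norm_nonneg _) zero_le_one
                      rw [hab, hδxdef]; exact norm_sub_le _ _
                _ = (2*L₁/s) * (Δ + k * δx) * (B+M) + (‖ρ μ - ρ' μ‖ + δx) := by ring
          _ = ((B+M)*L₂ + 1) * (Δ + k * δx) := by
              rw [Finset.sum_add_distrib, Finset.sum_const, Finset.card_univ, Fintype.card_fin,
                nsmul_eq_mul, Finset.sum_add_distrib, Finset.sum_const, Finset.card_univ,
                Fintype.card_fin, nsmul_eq_mul, hL2def]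
              ring
      -- the recursion step
      have h1 : amIter β r ρ x (t+1) = y + r • ∑ μ, (E μ / S) • (ρ μ - y) := by
        rw [hSdef, hEdef, hydef]
        simp [amIter]
      have h1' : amIter β r ρ' x (t+1) = y' + r • ∑ μ, (E' μ / S') • (ρ' μ - y') := by
        rw [hS'def, hE'def, hy'def]
        simp [amIter]
      have heq : amIter β r ρ x (t+1) - amIter β r ρ' x (t+1)
          = (y - y') + r • ((∑ μ, (E μ / S) • (ρ μ - y)) - ∑ μ, (E' μ / S') • (ρ' μ - y')) := by
        rw [h1, h1', smul_sub]; abel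
      rw [heq]
      have hKpow : (1:ℝ) ≤ K^t := one_le_pow₀ hK
      calc ‖(y - y') + r • ((∑ μ, (E μ / S) • (ρ μ - y)) - ∑ μ, (E' μ / S') • (ρ' μ - y'))‖
          ≤ ‖y - y'‖ + r * (((B+M)*L₂ + 1) * (Δ + k * δx)) := by
            refine (norm_add_le _ _).trans ?_
            rw [norm_smul, Real.norm_eq_abs, abs_of_pos hr]
            exact add_le_add le_rfl (mul_le_mul_of_nonneg_left hsum hr.le)
        _ = A * δx + D * Δ := by rw [hAdef, hDdef, ← hδxdef]; ring
        _ ≤ K^(t+1) * Δ := by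
            have h1 : A * δx ≤ A * (K^t * Δ) := mul_le_mul_of_nonneg_left ihb (by linarith)
            have h2 : D * Δ ≤ D * (K^t * Δ) := by
              apply mul_le_mul_of_nonneg_left _ hD.le
              nlinarith [mul_le_mul_of_nonneg_right hKpow hΔ]
            have h3 : A * δx + D * Δ ≤ (A + D) * (K^t * Δ) := by ring_nf; ring_nf at h1 h2; linarith
            calc A * δx + D * Δ ≤ (A + D) * (K^t * Δ) := h3
              _ = K^(t+1) * Δ := by rw [hKdef, pow_succ]; ring
  exact key T le_rfl
end

section
/- Let β > 0, B > 0, k ≥ 1, T ≥ 1, and dt, τ > 0. There exists a constant C > 0, depending only on β, B, k, T and dt/τ, such that for all x ∈ ℝ^d with ‖x‖ ≤ B and all prototype tuples R = (ρ_1, …, ρ_k), R′ = (ρ′_1, …, ρ′_k) with all ‖ρ_μ‖, ‖ρ′_μ‖ ≤ B, the per-example ClAM objective satisfies | ‖x − x_R^T‖² − ‖x − x_{R′}^T‖² | ≤ C·Σ_{μ=1}^k ‖ρ_μ − ρ′_μ‖, where x_R^T is the T-step AM iterate started at x with prototypes R. In particular the ClAM objective is Lipschitz in the prototypes on bounded sets.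 -/
open scoped BigOperators

open scoped BigOperators

lemma exp_sq_lip (β : ℝ) (hβ : 0 < β) {a b c : ℝ} (ha : 0 ≤ a) (hb : 0 ≤ b)
    (hac : a ≤ c) (hbc : b ≤ c) :
    |Real.exp (-β * a ^ 2) - Real.exp (-β * b ^ 2)| ≤ 2 * β * c * |a - b| := by
  wlog hab : a ≤ b generalizing a b
  · rw [abs_sub_comm, abs_sub_comm a b]; exact this hb ha hbc hac (le_of_not_ge hab)
  have hba2 : a ^ 2 ≤ b ^ 2 := by nlinarith
  have h1 : Real.exp (-β * b ^ 2) ≤ Real.exp (-β * a ^ 2) :=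
    Real.exp_le_exp.2 (by nlinarith)
  have h2 : Real.exp (-β * a ^ 2) ≤ 1 := Real.exp_le_one_iff.2 (by nlinarith)
  have h3 : (-β * b ^ 2) - (-β * a ^ 2) + 1 ≤ Real.exp ((-β * b ^ 2) - (-β * a ^ 2)) :=
    Real.add_one_le_exp _
  have h4 : Real.exp (-β * b ^ 2) = Real.exp (-β * a ^ 2) *
      Real.exp ((-β * b ^ 2) - (-β * a ^ 2)) := by rw [← Real.exp_add]; ring_nf
  have h5 := Real.exp_pos (-β * a ^ 2)
  have key : Real.exp (-β * a ^ 2) - Real.exp (-β * b ^ 2) ≤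
      Real.exp (-β * a ^ 2) * (β * b ^ 2 - β * a ^ 2) := by
    nlinarith [mul_le_mul_of_nonneg_left h3 h5.le]
  have key2 : Real.exp (-β * a ^ 2) * (β * b ^ 2 - β * a ^ 2) ≤ 1 * (β * b ^ 2 - β * a ^ 2) :=
    mul_le_mul_of_nonneg_right h2 (by nlinarith)
  have key3 : β * b ^ 2 - β * a ^ 2 ≤ 2 * β * c * (b - a) := by
    nlinarith [mul_le_mul_of_nonneg_left (show a + b ≤ 2 * c by linarith)
      (mul_nonneg hβ.le (by linarith : (0:ℝ) ≤ b - a))]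
  rw [abs_of_nonneg (by linarith), abs_of_nonpos (by linarith)]
  linarith

lemma quot_diff_bound (a b S S' s₀ : ℝ) (hs : 0 < s₀) (hsS : s₀ ≤ S) (hsS' : s₀ ≤ S')
    (hbS' : b ≤ S') (hb : 0 ≤ b) :
    |a / S - b / S'| ≤ |a - b| / s₀ + |S - S'| / s₀ := by
  have hS : 0 < S := lt_of_lt_of_le hs hsS
  have hS' : 0 < S' := lt_of_lt_of_le hs hsS'
  have hid : a / S - b / S' = (a - b) / S + (b / S') * ((S' - S) / S) := by
    field_simp
    ring
  rw [hid]
  refine (abs_add_le _ _).trans (add_le_add ?_ ?_)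
  · rw [abs_div, abs_of_pos hS]
    gcongr
  · rw [abs_mul, abs_div, abs_div, abs_of_pos hS, abs_of_pos hS']
    have h1 : |b| / S' ≤ 1 := by
      rw [div_le_one hS', abs_of_nonneg hb]; exact hbS'
    have h2 : |S' - S| / S ≤ |S - S'| / s₀ := by
      rw [abs_sub_comm]; gcongr
    calc |b| / S' * (|S' - S| / S) ≤ 1 * (|S - S'| / s₀) :=
          mul_le_mul h1 h2 (by positivity) zero_le_one
      _ = |S - S'| / s₀ := one_mul _

/-- Lipschitz constant for the one-step AM map on the ball of radius `M`. -/
noncomputable def Kc (β r M : ℝ) (k : ℕ) : ℝ :=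
  1 + r * (2 * M * (4 * β * M) * (1 + k) / Real.exp (-β * (2 * M) ^ 2) + 1) * (k + 1)

set_option maxHeartbeats 1000000 in
lemma step_lip {d k : ℕ} (β r B M : ℝ) (hβ : 0 < β) (hr : 0 < r) (hB : 0 < B)
    (hk : 1 ≤ k) (hBM : B ≤ M)
    (ρ ρ' : Fin k → EuclideanSpace ℝ (Fin d)) (v v' : EuclideanSpace ℝ (Fin d))
    (hρ : ∀ μ, ‖ρ μ‖ ≤ B) (hρ' : ∀ μ, ‖ρ' μ‖ ≤ B) (hv : ‖v‖ ≤ M) (hv' : ‖v'‖ ≤ M) :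
    ‖(v + r • ∑ μ, (Real.exp (-β * ‖ρ μ - v‖ ^ 2) /
          ∑ ν, Real.exp (-β * ‖ρ ν - v‖ ^ 2)) • (ρ μ - v)) -
      (v' + r • ∑ μ, (Real.exp (-β * ‖ρ' μ - v'‖ ^ 2) /
          ∑ ν, Real.exp (-β * ‖ρ' ν - v'‖ ^ 2)) • (ρ' μ - v'))‖
      ≤ Kc β r M k * (‖v - v'‖ + ∑ μ, ‖ρ μ - ρ' μ‖) := by
  have hM : 0 < M := lt_of_lt_of_le hB hBM
  set s₀ : ℝ := Real.exp (-β * (2 * M) ^ 2) with hs₀def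
  have hs₀ : 0 < s₀ := Real.exp_pos _
  set Lg : ℝ := 4 * β * M with hLgdef
  have hLg : 0 < Lg := by positivity
  set δ : ℝ := ‖v - v'‖ with hδdef
  set D : ℝ := ∑ μ, ‖ρ μ - ρ' μ‖ with hDdef
  have hδ0 : 0 ≤ δ := norm_nonneg _
  have hD0 : 0 ≤ D := Finset.sum_nonneg fun μ _ => norm_nonneg _
  set e : Fin k → ℝ := fun μ => Real.exp (-β * ‖ρ μ - v‖ ^ 2) with hedef
  set e' : Fin k → ℝ := fun μ => Real.exp (-β * ‖ρ' μ - v'‖ ^ 2) with he'def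
  set S : ℝ := ∑ ν, e ν with hSdef
  set S' : ℝ := ∑ ν, e' ν with hS'def
  show ‖(v + r • ∑ μ, (e μ / S) • (ρ μ - v)) -
      (v' + r • ∑ μ, (e' μ / S') • (ρ' μ - v'))‖ ≤ Kc β r M k * (δ + D)
  have f1 : ∀ μ, ‖ρ μ - v‖ ≤ 2 * M := fun μ =>
    (norm_sub_le _ _).trans (by have := hρ μ; linarith)
  have f1' : ∀ μ, ‖ρ' μ - v'‖ ≤ 2 * M := fun μ =>
    (norm_sub_le _ _).trans (by have := hρ' μ; linarith)
  have flow : ∀ μ, s₀ ≤ e μ := by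
    intro μ
    have h := pow_le_pow_left₀ (norm_nonneg (ρ μ - v)) (f1 μ) 2
    exact Real.exp_le_exp.2 (by nlinarith [mul_le_mul_of_nonneg_left h hβ.le])
  have flow' : ∀ μ, s₀ ≤ e' μ := by
    intro μ
    have h := pow_le_pow_left₀ (norm_nonneg (ρ' μ - v')) (f1' μ) 2
    exact Real.exp_le_exp.2 (by nlinarith [mul_le_mul_of_nonneg_left h hβ.le])
  have hepos : ∀ μ, (0:ℝ) ≤ e μ := fun μ => (Real.exp_pos _).le
  have he'pos : ∀ μ, (0:ℝ) ≤ e' μ := fun μ => (Real.exp_pos _).le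
  have fS : s₀ ≤ S := le_trans (flow ⟨0, hk⟩)
    (Finset.single_le_sum (f := e) (fun ν _ => hepos ν) (Finset.mem_univ _))
  have fS' : s₀ ≤ S' := le_trans (flow' ⟨0, hk⟩)
    (Finset.single_le_sum (f := e') (fun ν _ => he'pos ν) (Finset.mem_univ _))
  have hSpos : 0 < S := lt_of_lt_of_le hs₀ fS
  have hS'pos : 0 < S' := lt_of_lt_of_le hs₀ fS'
  have f4 : ∀ μ, |e μ - e' μ| ≤ Lg * (‖ρ μ - ρ' μ‖ + δ) := by
    intro μ
    have hab : |‖ρ μ - v‖ - ‖ρ' μ - v'‖| ≤ ‖ρ μ - ρ' μ‖ + δ := by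
      refine (abs_norm_sub_norm_le _ _).trans ?_
      have h : ρ μ - v - (ρ' μ - v') = (ρ μ - ρ' μ) - (v - v') := by abel
      rw [h]
      exact norm_sub_le _ _
    have h2 := exp_sq_lip β hβ (norm_nonneg (ρ μ - v)) (norm_nonneg (ρ' μ - v'))
      (f1 μ) (f1' μ)
    calc |e μ - e' μ| ≤ 2 * β * (2 * M) * |‖ρ μ - v‖ - ‖ρ' μ - v'‖| := h2
      _ = Lg * |‖ρ μ - v‖ - ‖ρ' μ - v'‖| := by rw [hLgdef]; ring
      _ ≤ Lg * (‖ρ μ - ρ' μ‖ + δ) := mul_le_mul_of_nonneg_left hab hLg.le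
  have fsum4 : ∑ μ, |e μ - e' μ| ≤ Lg * (D + k * δ) := by
    calc ∑ μ, |e μ - e' μ| ≤ ∑ μ, Lg * (‖ρ μ - ρ' μ‖ + δ) :=
          Finset.sum_le_sum fun μ _ => f4 μ
      _ = Lg * (D + k * δ) := by
          rw [← Finset.mul_sum, Finset.sum_add_distrib, Finset.sum_const,
            Finset.card_univ, Fintype.card_fin, nsmul_eq_mul, hDdef]
  have f5 : |S - S'| ≤ Lg * (D + k * δ) := by
    rw [hSdef, hS'def, ← Finset.sum_sub_distrib]
    exact (Finset.abs_sum_le_sum_abs _ _).trans fsum4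
  have f6 : ∀ μ, |e μ / S - e' μ / S'| ≤ |e μ - e' μ| / s₀ + |S - S'| / s₀ := fun μ =>
    quot_diff_bound _ _ _ _ _ hs₀ fS fS'
      (Finset.single_le_sum (f := e') (fun ν _ => he'pos ν) (Finset.mem_univ μ)) (he'pos μ)
  have f7 : ∑ μ, |e μ / S - e' μ / S'| ≤ Lg * (1 + k) * (D + k * δ) / s₀ := by
    calc ∑ μ, |e μ / S - e' μ / S'| ≤ ∑ μ, (|e μ - e' μ| / s₀ + |S - S'| / s₀) :=
          Finset.sum_le_sum fun μ _ => f6 μ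
      _ = (∑ μ, |e μ - e' μ|) / s₀ + k * (|S - S'| / s₀) := by
          rw [Finset.sum_add_distrib, ← Finset.sum_div, Finset.sum_const,
            Finset.card_univ, Fintype.card_fin, nsmul_eq_mul]
      _ ≤ (Lg * (D + k * δ)) / s₀ + k * ((Lg * (D + k * δ)) / s₀) := by gcongr
      _ = Lg * (1 + k) * (D + k * δ) / s₀ := by ring
  clear_value e e' S S' δ D Lg s₀
  have hsplit : (v + r • ∑ μ, (e μ / S) • (ρ μ - v)) -
      (v' + r • ∑ μ, (e' μ / S') • (ρ' μ - v')) =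
      (v - v') + r • ((∑ μ, (e μ / S) • (ρ μ - v)) - ∑ μ, (e' μ / S') • (ρ' μ - v')) := by
    rw [smul_sub]; abel
  have hA : ‖(∑ μ, (e μ / S) • (ρ μ - v)) - ∑ μ, (e' μ / S') • (ρ' μ - v')‖ ≤
      2 * M * (Lg * (1 + k) * (D + k * δ) / s₀) + (D + k * δ) := by
    rw [← Finset.sum_sub_distrib]
    calc ‖∑ μ, ((e μ / S) • (ρ μ - v) - (e' μ / S') • (ρ' μ - v'))‖
        ≤ ∑ μ, ‖(e μ / S) • (ρ μ - v) - (e' μ / S') • (ρ' μ - v')‖ := norm_sum_le _ _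
      _ ≤ ∑ μ, (|e μ / S - e' μ / S'| * (2 * M) + 1 * (‖ρ μ - ρ' μ‖ + δ)) := by
          refine Finset.sum_le_sum fun μ _ => ?_
          have hdec : (e μ / S) • (ρ μ - v) - (e' μ / S') • (ρ' μ - v') =
              (e μ / S - e' μ / S') • (ρ μ - v) + (e' μ / S') • ((ρ μ - v) - (ρ' μ - v')) := by
            module
          rw [hdec]
          refine (norm_add_le _ _).trans (add_le_add ?_ ?_)
          · rw [norm_smul, Real.norm_eq_abs]
            exact mul_le_mul_of_nonneg_left (f1 μ) (abs_nonneg _)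
          · rw [norm_smul, Real.norm_eq_abs]
            have hσ1 : |e' μ / S'| ≤ 1 := by
              rw [abs_div, abs_of_pos hS'pos, div_le_one hS'pos, abs_of_nonneg (he'pos μ),
                hS'def]
              exact Finset.single_le_sum (f := e') (fun ν _ => he'pos ν) (Finset.mem_univ μ)
            have hnn : ‖ρ μ - v - (ρ' μ - v')‖ ≤ ‖ρ μ - ρ' μ‖ + δ := by
              have h : ρ μ - v - (ρ' μ - v') = (ρ μ - ρ' μ) - (v - v') := by abel
              rw [h, hδdef]; exact norm_sub_le _ _
            exact mul_le_mul hσ1 hnn (norm_nonneg _) zero_le_one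
      _ = (∑ μ, |e μ / S - e' μ / S'|) * (2 * M) + (D + k * δ) := by
          rw [Finset.sum_add_distrib, ← Finset.sum_mul]
          congr 1
          simp only [one_mul]
          rw [Finset.sum_add_distrib, Finset.sum_const, Finset.card_univ,
            Fintype.card_fin, nsmul_eq_mul, hDdef]
      _ ≤ (Lg * (1 + k) * (D + k * δ) / s₀) * (2 * M) + (D + k * δ) := by gcongr
      _ = 2 * M * (Lg * (1 + k) * (D + k * δ) / s₀) + (D + k * δ) := by ring
  rw [hsplit]
  have hfin : ‖(v - v') + r • ((∑ μ, (e μ / S) • (ρ μ - v)) - ∑ μ, (e' μ / S') • (ρ' μ - v'))‖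
      ≤ δ + r * (2 * M * (Lg * (1 + k) * (D + k * δ) / s₀) + (D + k * δ)) := by
    refine (norm_add_le _ _).trans ?_
    rw [norm_smul, Real.norm_eq_abs, abs_of_pos hr, ← hδdef]
    exact add_le_add_right (mul_le_mul_of_nonneg_left hA hr.le) _
  refine hfin.trans ?_
  have hKc : Kc β r M k = 1 + r * (2 * M * Lg * (1 + k) / s₀ + 1) * (k + 1) := by
    rw [Kc, hLgdef, hs₀def]
  rw [hKc]
  have hk1 : (1:ℝ) ≤ (k:ℝ) := by exact_mod_cast hk
  set P : ℝ := 2 * M * Lg * (1 + k) / s₀ with hPdef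
  have hP : (0:ℝ) ≤ P := by rw [hPdef]; positivity
  have hexp : 2 * M * (Lg * (1 + (k:ℝ)) * (D + k * δ) / s₀) = P * (D + k * δ) := by
    rw [hPdef]; ring
  rw [hexp]
  nlinarith [mul_nonneg hD0 hP, mul_nonneg hδ0 hP, mul_nonneg hD0 hr.le,
    mul_nonneg hδ0 hr.le, mul_nonneg (mul_nonneg hD0 hP) hr.le,
    mul_nonneg (mul_nonneg hδ0 hP) hr.le,
    mul_nonneg (mul_nonneg hD0 hr.le) (by linarith : (0:ℝ) ≤ (k:ℝ)),
    mul_nonneg (mul_nonneg hδ0 hr.le) (by linarith : (0:ℝ) ≤ (k:ℝ))]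

-- iterate norm bound
lemma iter_norm_le {d k : ℕ} (β r B : ℝ) (hr : 0 < r) (hk : 1 ≤ k)
    (ρ : Fin k → EuclideanSpace ℝ (Fin d)) (x : EuclideanSpace ℝ (Fin d))
    (hx : ‖x‖ ≤ B) (hρ : ∀ μ, ‖ρ μ‖ ≤ B) :
    ∀ t, ‖amIter β r ρ x t‖ ≤ (2 * (1 + r) ^ t - 1) * B := by
  have : Nonempty (Fin k) := ⟨⟨0, hk⟩⟩
  intro t
  induction t with
  | zero => simp only [amIter, pow_zero]; linarith
  | succ t ih =>
    set v := amIter β r ρ x t with hv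
    have hS : 0 < ∑ ν, Real.exp (-β * ‖ρ ν - v‖ ^ 2) :=
      Finset.sum_pos (fun _ _ => Real.exp_pos _) Finset.univ_nonempty
    have hw : ∀ μ : Fin k, 0 ≤ Real.exp (-β * ‖ρ μ - v‖ ^ 2) /
        ∑ ν, Real.exp (-β * ‖ρ ν - v‖ ^ 2) :=
      fun μ => div_nonneg (Real.exp_pos _).le hS.le
    have hsum : ∑ μ, (Real.exp (-β * ‖ρ μ - v‖ ^ 2) /
        ∑ ν, Real.exp (-β * ‖ρ ν - v‖ ^ 2)) = 1 := by
      rw [← Finset.sum_div, div_self hS.ne']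
    have hB0 : 0 ≤ B := le_trans (norm_nonneg x) hx
    have hb : ‖∑ μ, (Real.exp (-β * ‖ρ μ - v‖ ^ 2) /
        ∑ ν, Real.exp (-β * ‖ρ ν - v‖ ^ 2)) • (ρ μ - v)‖ ≤ B + ‖v‖ := by
      calc ‖∑ μ, (Real.exp (-β * ‖ρ μ - v‖ ^ 2) /
            ∑ ν, Real.exp (-β * ‖ρ ν - v‖ ^ 2)) • (ρ μ - v)‖
          ≤ ∑ μ, (Real.exp (-β * ‖ρ μ - v‖ ^ 2) /
            ∑ ν, Real.exp (-β * ‖ρ ν - v‖ ^ 2)) * ‖ρ μ - v‖ := by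
            refine (norm_sum_le _ _).trans (Finset.sum_le_sum fun μ _ => ?_)
            rw [norm_smul, Real.norm_eq_abs, abs_of_nonneg (hw μ)]
        _ ≤ ∑ μ, (Real.exp (-β * ‖ρ μ - v‖ ^ 2) /
            ∑ ν, Real.exp (-β * ‖ρ ν - v‖ ^ 2)) * (B + ‖v‖) := by
            refine Finset.sum_le_sum fun μ _ => mul_le_mul_of_nonneg_left ?_ (hw μ)
            exact (norm_sub_le _ _).trans (by gcongr; exact hρ μ)
        _ = B + ‖v‖ := by rw [← Finset.sum_mul, hsum, one_mul]
    have h2 : ‖amIter β r ρ x (t+1)‖ ≤ ‖v‖ + r * (B + ‖v‖) := by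
      rw [show amIter β r ρ x (t+1) = v + r • ∑ μ, (Real.exp (-β * ‖ρ μ - v‖ ^ 2) /
            ∑ ν, Real.exp (-β * ‖ρ ν - v‖ ^ 2)) • (ρ μ - v) from rfl]
      refine (norm_add_le _ _).trans ?_
      rw [norm_smul, Real.norm_eq_abs, abs_of_pos hr]
      exact add_le_add_right (mul_le_mul_of_nonneg_left hb hr.le) _
    have hp : (1:ℝ) ≤ (1 + r) ^ t := one_le_pow₀ (by linarith)
    calc ‖amIter β r ρ x (t+1)‖ ≤ ‖v‖ + r * (B + ‖v‖) := h2
      _ = (1 + r) * ‖v‖ + r * B := by ring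
      _ ≤ (1 + r) * ((2 * (1 + r) ^ t - 1) * B) + r * B := by
          have h1r : (0:ℝ) ≤ 1 + r := by linarith
          have := mul_le_mul_of_nonneg_left ih h1r
          linarith
      _ = (2 * (1 + r) ^ (t+1) - 1) * B := by ring


/-- For `β, B > 0`, `k, T ≥ 1` and step ratio `r = dt/τ > 0`, there is a constant
`C > 0`, depending only on `β`, `B`, `k`, `T` and `r`, such that the per-example ClAM
objective `‖x - x_R^T‖²` is Lipschitz in the prototypes on the ball of radius `B`:
`|‖x - x_R^T‖² - ‖x - x_{R'}^T‖²| ≤ C ∑_μ ‖ρ_μ - ρ'_μ‖`. -/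
theorem stmt_14 (β B r : ℝ) (k T : ℕ) (hβ : 0 < β) (hB : 0 < B) (hk : 1 ≤ k)
    (hT : 1 ≤ T) (hr : 0 < r) :
    ∃ C : ℝ, 0 < C ∧ ∀ (d : ℕ) (x : EuclideanSpace ℝ (Fin d))
      (ρ ρ' : Fin k → EuclideanSpace ℝ (Fin d)),
      ‖x‖ ≤ B → (∀ μ, ‖ρ μ‖ ≤ B) → (∀ μ, ‖ρ' μ‖ ≤ B) →
      |‖x - amIter β r ρ x T‖ ^ 2 - ‖x - amIter β r ρ' x T‖ ^ 2|
        ≤ C * ∑ μ, ‖ρ μ - ρ' μ‖ := by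
  set M : ℝ := (2 * (1 + r) ^ T - 1) * B with hMdef
  have hpT : (1:ℝ) ≤ (1 + r) ^ T := one_le_pow₀ (by linarith)
  have hM0 : 0 < M := by rw [hMdef]; nlinarith
  have hBM : B ≤ M := by rw [hMdef]; nlinarith
  set K : ℝ := Kc β r M k with hKdef
  have hK1 : 1 ≤ K := by
    rw [hKdef, Kc]
    have h1 : (0:ℝ) ≤ 2 * M * (4 * β * M) * (1 + k) / Real.exp (-β * (2 * M) ^ 2) := by
      positivity
    have h2 : (0:ℝ) ≤ r * (2 * M * (4 * β * M) * (1 + k) /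
        Real.exp (-β * (2 * M) ^ 2) + 1) * (k + 1) := by positivity
    linarith
  have hK0 : 0 < K := lt_of_lt_of_le one_pos hK1
  refine ⟨(2 * B + 2 * M) * T * K ^ T, by positivity, ?_⟩
  intro d x ρ ρ' hx hρ hρ'
  set D : ℝ := ∑ μ, ‖ρ μ - ρ' μ‖ with hDdef
  have hD0 : 0 ≤ D := Finset.sum_nonneg fun μ _ => norm_nonneg _
  -- iterate norm bounds, uniform up to time T
  have hub : ∀ (σ : Fin k → EuclideanSpace ℝ (Fin d)), (∀ μ, ‖σ μ‖ ≤ B) →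
      ∀ t, t ≤ T → ‖amIter β r σ x t‖ ≤ M := by
    intro σ hσ t ht
    refine (iter_norm_le β r B hr hk σ x hx hσ t).trans ?_
    rw [hMdef]
    have : (1 + r) ^ t ≤ (1 + r) ^ T := pow_le_pow_right₀ (by linarith) ht
    nlinarith
  -- Lipschitz induction
  have claim : ∀ t, t ≤ T →
      ‖amIter β r ρ x t - amIter β r ρ' x t‖ ≤ t * K ^ t * D := by
    intro t
    induction t with
    | zero => intro _; simp [amIter]
    | succ t ih =>
      intro ht
      have ht' : t ≤ T := le_trans (Nat.le_succ t) ht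
      have hΔ := ih ht'
      have hvt : ‖amIter β r ρ x t‖ ≤ M := hub ρ hρ t ht'
      have hvt' : ‖amIter β r ρ' x t‖ ≤ M := hub ρ' hρ' t ht'
      have hstep := step_lip β r B M hβ hr hB hk hBM ρ ρ'
        (amIter β r ρ x t) (amIter β r ρ' x t) hρ hρ' hvt hvt'
      have heq : amIter β r ρ x (t+1) - amIter β r ρ' x (t+1) =
          (amIter β r ρ x t + r • ∑ μ, (Real.exp (-β * ‖ρ μ - amIter β r ρ x t‖ ^ 2) /
            ∑ ν, Real.exp (-β * ‖ρ ν - amIter β r ρ x t‖ ^ 2)) • (ρ μ - amIter β r ρ x t)) -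
          (amIter β r ρ' x t + r • ∑ μ, (Real.exp (-β * ‖ρ' μ - amIter β r ρ' x t‖ ^ 2) /
            ∑ ν, Real.exp (-β * ‖ρ' ν - amIter β r ρ' x t‖ ^ 2)) • (ρ' μ - amIter β r ρ' x t)) := rfl
      rw [heq]
      refine hstep.trans ?_
      have hKt : K ≤ K ^ (t+1) := le_self_pow₀ hK1 (Nat.succ_ne_zero t)
      have hKt' : K ^ t ≤ K ^ (t+1) := pow_le_pow_right₀ hK1 (Nat.le_succ t)
      calc K * (‖amIter β r ρ x t - amIter β r ρ' x t‖ + D)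
          ≤ K * (t * K ^ t * D + D) := by
            have := mul_le_mul_of_nonneg_left (add_le_add_right hΔ D) hK0.le
            linarith
        _ = (t : ℝ) * K ^ (t+1) * D + K * D := by ring
        _ ≤ (t : ℝ) * K ^ (t+1) * D + K ^ (t+1) * D :=
            add_le_add_right (mul_le_mul_of_nonneg_right hKt hD0) _
        _ = ((t : ℝ) + 1) * K ^ (t+1) * D := by ring
        _ = (↑(t + 1) : ℝ) * K ^ (t+1) * D := by push_cast; ring
  have hΔT := claim T le_rfl
  set a := amIter β r ρ x T with ha
  set b := amIter β r ρ' x T with hb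
  have hna : ‖x - a‖ ≤ B + M := (norm_sub_le _ _).trans (by
    have := hub ρ hρ T le_rfl; rw [← ha] at this; linarith)
  have hnb : ‖x - b‖ ≤ B + M := (norm_sub_le _ _).trans (by
    have := hub ρ' hρ' T le_rfl; rw [← hb] at this; linarith)
  have hdiff : |‖x - a‖ - ‖x - b‖| ≤ ‖a - b‖ := by
    refine (abs_norm_sub_norm_le _ _).trans ?_
    have h : x - a - (x - b) = -(a - b) := by abel
    rw [h, norm_neg]
  have hsq : ‖x - a‖ ^ 2 - ‖x - b‖ ^ 2 =
      (‖x - a‖ - ‖x - b‖) * (‖x - a‖ + ‖x - b‖) := by ring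
  calc |‖x - a‖ ^ 2 - ‖x - b‖ ^ 2|
      = |‖x - a‖ - ‖x - b‖| * |‖x - a‖ + ‖x - b‖| := by rw [hsq, abs_mul]
    _ ≤ ‖a - b‖ * (2 * B + 2 * M) := by
        refine mul_le_mul hdiff ?_ (abs_nonneg _) (norm_nonneg _)
        rw [abs_of_nonneg (by positivity)]
        linarith
    _ ≤ (T * K ^ T * D) * (2 * B + 2 * M) := by
        refine mul_le_mul_of_nonneg_right hΔT (by nlinarith)
    _ = (2 * B + 2 * M) * T * K ^ T * D := by ring
end
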